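/- Suppose h, f, g : ℝ → ℝ are strictly increasing continuous functions, h is surjective with unique zero ξ₀, f(x) < x for all x ∈ ℝ, g has a fixed point x₁ with ξ₀ < x₁ ≤ f⁻¹(ξ₀), and g(x) ≥ x for all x ≥ x₁. Set x₀ := f(x₁) and x₃ := h(x₁) + x₁, and choose any x₂ with x₁ < x₂ < x₃. Then for any strictly increasing continuous surjections φ₀ : [x₀, x₁] → [x₁, x₂] and φ₁ : [x₁, x₂] → [x₂, x₃], there exists a unique continuous function φ : ℝ → ℝ extending φ₀ and φ₁ such that φ(φ(x)) = h(φ(f(x))) + g(x) for all x ∈ ℝ. -/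

import Mathlib

open Set Function Filter

private lemma surj_of_bounds {F : ℝ → ℝ} (hc : Continuous F)
    (H : ∀ z : ℝ, ∃ u v : ℝ, F u ≤ z ∧ z ≤ F v) : Function.Surjective F := by
  intro z
  obtain ⟨u, v, h1, h2⟩ := H z
  rcases le_total u v with huv | huv
  · obtain ⟨x, _, hx⟩ := intermediate_value_Icc huv hc.continuousOn ⟨h1, h2⟩
    exact ⟨x, hx⟩
  · obtain ⟨x, _, hx⟩ := intermediate_value_Icc' huv hc.continuousOn ⟨h1, h2⟩
    exact ⟨x, hx⟩

private lemma img_endpoints {F : ℝ → ℝ} {p q r s : ℝ} (hpq : p ≤ q)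
    (hm : StrictMonoOn F (Set.Icc p q)) (him : F '' Set.Icc p q = Set.Icc r s) :
    F p = r ∧ F q = s := by
  have hp : F p ∈ Set.Icc r s := him ▸ mem_image_of_mem F (left_mem_Icc.2 hpq)
  have hq : F q ∈ Set.Icc r s := him ▸ mem_image_of_mem F (right_mem_Icc.2 hpq)
  have hrs : r ≤ s := hp.1.trans hp.2
  have hr : r ∈ F '' Set.Icc p q := him.symm ▸ (left_mem_Icc.2 hrs)
  have hs : s ∈ F '' Set.Icc p q := him.symm ▸ (right_mem_Icc.2 hrs)
  obtain ⟨c, hc, hFc⟩ := hr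
  obtain ⟨d, hd, hFd⟩ := hs
  constructor
  · exact le_antisymm (hFc ▸ hm.monotoneOn (left_mem_Icc.2 hpq) hc hc.1) hp.1
  · exact le_antisymm hq.2 (hFd ▸ hm.monotoneOn hd (right_mem_Icc.2 hpq) hd.2)

private lemma strictMono_piece3 {F : ℝ → ℝ} {c₁ c₂ : ℝ} (h12 : c₁ ≤ c₂)
    (m1 : StrictMonoOn F (Set.Iic c₁)) (m2 : StrictMonoOn F (Set.Icc c₁ c₂))
    (m3 : StrictMonoOn F (Set.Ici c₂)) : StrictMono F := by
  have le1 : ∀ x, x ≤ c₁ → F x ≤ F c₁ := fun x hx =>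
    m1.monotoneOn hx (le_refl c₁ : c₁ ∈ Set.Iic c₁) hx
  have le2 : ∀ x, c₁ ≤ x → x ≤ c₂ → F x ≤ F c₂ :=
    fun x hx hx' => m2.monotoneOn ⟨hx, hx'⟩ ⟨h12, le_rfl⟩ hx'
  have le2' : ∀ x, c₁ ≤ x → x ≤ c₂ → F c₁ ≤ F x :=
    fun x hx hx' => m2.monotoneOn ⟨le_rfl, h12⟩ ⟨hx, hx'⟩ hx
  have le3 : ∀ x, c₂ ≤ x → F c₂ ≤ F x := fun x hx =>
    m3.monotoneOn (le_refl c₂ : c₂ ∈ Set.Ici c₂) hx hx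
  intro x y hxy
  rcases le_or_gt y c₁ with hy1 | hy1
  · exact m1 (hxy.le.trans hy1) hy1 hxy
  rcases le_or_gt y c₂ with hy2 | hy2
  · rcases le_or_gt x c₁ with hx1 | hx1
    · exact lt_of_le_of_lt (le1 x hx1) (m2 ⟨le_rfl, h12⟩ ⟨hy1.le, hy2⟩ hy1)
    · exact m2 ⟨hx1.le, hxy.le.trans hy2⟩ ⟨hy1.le, hy2⟩ hxy
  · rcases le_or_gt x c₁ with hx1 | hx1
    · exact lt_of_le_of_lt (le1 x hx1) (lt_of_le_of_lt (le2' c₂ h12 le_rfl) (m3 (le_refl c₂ : c₂ ∈ Set.Ici c₂) hy2.le hy2))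
    rcases le_or_gt x c₂ with hx2 | hx2
    · exact lt_of_le_of_lt (le2 x hx1.le hx2) (m3 (le_refl c₂ : c₂ ∈ Set.Ici c₂) hy2.le hy2)
    · exact m3 hx2.le (hx2.le.trans hxy.le) hxy
private def IsGood (h f g φ₀ φ₁ : ℝ → ℝ) (x₁ x₂ : ℝ) (s : (ℝ × ℝ) × (ℝ → ℝ)) : Prop :=
  x₁ ≤ s.1.1 ∧ s.1.1 < s.1.2 ∧ x₂ ≤ s.1.2 ∧ s.2 s.1.1 = s.1.2 ∧ s.1.2 < s.2 s.1.2 ∧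
  StrictMono s.2 ∧ Continuous s.2 ∧ Function.Surjective s.2 ∧
  (∀ x ∈ Set.Icc (f x₁) x₁, s.2 x = φ₀ x) ∧ (∀ x ∈ Set.Icc x₁ x₂, s.2 x = φ₁ x) ∧
  (∀ x ∈ Set.Icc x₁ s.1.1, s.2 (s.2 x) = h (s.2 (f x)) + g x)

private lemma step_exists {h f g φ₀ φ₁ : ℝ → ℝ} {x₁ x₂ : ℝ}
    (hhc : Continuous h) (hfc : Continuous f) (hgc : Continuous g)
    (hhm : StrictMono h) (hfm : StrictMono f) (hgm : StrictMono g)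
    (hgx : ∀ x : ℝ, x₁ ≤ x → x ≤ g x) (hfx : ∀ x : ℝ, f x < x)
    (s : (ℝ × ℝ) × (ℝ → ℝ)) (hs : IsGood h f g φ₀ φ₁ x₁ x₂ s) :
    ∃ s' : (ℝ × ℝ) × (ℝ → ℝ), IsGood h f g φ₀ φ₁ x₁ x₂ s' ∧ s'.1.1 = s.1.2 ∧
      s'.1.2 = s.2 s.1.2 ∧ (∀ y : ℝ, y ≤ s.1.2 → s'.2 y = s.2 y) ∧
      s'.2 s'.1.2 = h (s.2 (f s.1.2)) + g s.1.2 := by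
  classical
  obtain ⟨⟨b, B⟩, Φ⟩ := s
  obtain ⟨hb, hbB, hx2B, hΦb, hBB, hmono, hcont, hsurj, h8, h9, h10⟩ := hs
  simp only at hb hbB hx2B hΦb hBB h8 h9 h10 ⊢
  set e := StrictMono.orderIsoOfSurjective Φ hmono hsurj with he
  have hecoe : ∀ x, e x = Φ x := fun x => congrFun (StrictMono.coe_orderIsoOfSurjective Φ hmono hsurj) x
  have hes : ∀ x, e.symm (Φ x) = x := fun x =>
    StrictMono.orderIsoOfSurjective_symm_apply_self Φ hmono hsurj x
  have hes' : ∀ y, Φ (e.symm y) = y := fun y =>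
    StrictMono.orderIsoOfSurjective_self_symm_apply Φ hmono hsurj y
  have hesm : StrictMono (fun y => (e.symm y : ℝ)) := fun a b hab => e.symm.strictMono hab
  have hesc : Continuous (fun y => (e.symm y : ℝ)) := OrderIso.continuous e.symm
  set G : ℝ → ℝ := fun y => h (Φ (f (e.symm y))) + g (e.symm y) with hG
  have hesB : (e.symm B : ℝ) = b := by rw [← hΦb, hes]
  have hGB : G B = Φ B := by
    rw [hG]; simp only [hesB]
    rw [← h10 b ⟨hb, le_rfl⟩, hΦb]
  have hGmono : StrictMono G := fun a c hac =>
    add_lt_add (hhm (hmono (hfm (hesm hac)))) (hgm (hesm hac))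
  have hGcont : Continuous G :=
    ((hhc.comp (hcont.comp (hfc.comp hesc)))).add (hgc.comp hesc)
  set Φ' : ℝ → ℝ := fun y => if y ≤ B then Φ y else G y with hΦ'
  have hΦ'le : ∀ y, y ≤ B → Φ' y = Φ y := fun y hy => if_pos hy
  have hΦ'gt : ∀ y, B < y → Φ' y = G y := fun y hy => if_neg (not_le.2 hy)
  have hΦ'mono : StrictMono Φ' := by
    intro y z hyz
    rcases le_or_gt z B with hz | hz
    · rw [hΦ'le y (hyz.le.trans hz), hΦ'le z hz]; exact hmono hyz
    rcases le_or_gt y B with hy | hy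
    · rw [hΦ'le y hy, hΦ'gt z hz]
      calc Φ y ≤ Φ B := hmono.monotone hy
        _ = G B := hGB.symm
        _ < G z := hGmono hz
    · rw [hΦ'gt y hy, hΦ'gt z hz]; exact hGmono hyz
  have hΦ'cont : Continuous Φ' := by
    apply Continuous.if_le hcont hGcont continuous_id continuous_const
    intro a ha; simp only [id_eq] at ha; subst ha; exact hGB.symm
  have hΦ'surj : Function.Surjective Φ' := by
    apply surj_of_bounds hΦ'cont
    intro z
    set u : ℝ := e.symm (min z (Φ B)) with hu
    set w : ℝ := max b (z - h (Φ (f b))) with hw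
    have hwb : b ≤ w := le_max_left _ _
    have huB : u ≤ B := by
      have h1 : (e.symm (min z (Φ B)) : ℝ) ≤ e.symm (Φ B) := e.symm.monotone (min_le_right _ _)
      rw [hes B] at h1; exact h1
    have hΦwB : B ≤ Φ w := hΦb ▸ hmono.monotone hwb
    refine ⟨u, Φ w, ?_, ?_⟩
    · rw [hΦ'le u huB, hu, hes' (min z (Φ B))]; exact min_le_left _ _
    · have hval : Φ' (Φ w) = G (Φ w) := by
        rcases eq_or_lt_of_le hΦwB with hEq | hlt
        · rw [hΦ'le _ hEq.ge, ← hEq]; exact hGB.symm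
        · exact hΦ'gt _ hlt
      rw [hval, hG]
      simp only [hes w]
      have hgw : w ≤ g w := hgx w (hb.trans hwb)
      have hhw : h (Φ (f b)) ≤ h (Φ (f w)) := hhm.monotone (hmono.monotone (hfm.monotone hwb))
      have : z - h (Φ (f b)) ≤ w := le_max_right _ _
      linarith
  refine ⟨((B, Φ B), Φ'), ?_, rfl, rfl, fun y hy => hΦ'le y hy, ?_⟩
  · refine ⟨hb.trans hbB.le, hBB, hx2B.trans hBB.le, hΦ'le B le_rfl, ?_, hΦ'mono, hΦ'cont, hΦ'surj, ?_, ?_, ?_⟩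
    · -- Φ B < Φ' (Φ B)
      show Φ B < Φ' (Φ B)
      rw [hΦ'gt (Φ B) hBB, hG]
      simp only [hes B, hesB]
      have hΦB : Φ B = h (Φ (f b)) + g b := by rw [← h10 b ⟨hb, le_rfl⟩, hΦb]
      rw [hΦB]
      exact add_lt_add (hhm (hmono (hfm hbB))) (hgm hbB)
    · intro x hx
      show Φ' x = φ₀ x
      rw [hΦ'le x (hx.2.trans (hb.trans hbB.le))]; exact h8 x hx
    · intro x hx
      show Φ' x = φ₁ x
      rw [hΦ'le x (hx.2.trans hx2B)]; exact h9 x hx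
    · -- the iterative equation up to B
      intro x hx
      simp only at hx
      show Φ' (Φ' x) = h (Φ' (f x)) + g x
      have hxB : x ≤ B := hx.2
      have hfxB : f x ≤ B := (hfx x).le.trans hxB
      rw [hΦ'le x hxB, hΦ'le (f x) hfxB]
      rcases le_or_gt x b with hxb | hxb
      · have hΦxB : Φ x ≤ B := hΦb ▸ hmono.monotone hxb
        rw [hΦ'le _ hΦxB]
        exact h10 x ⟨hx.1, hxb⟩
      · have hΦxB : B < Φ x := hΦb ▸ hmono hxb
        rw [hΦ'gt _ hΦxB, hG]
        simp only [hes x]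
  · -- value at new top
    show Φ' (Φ B) = h (Φ (f B)) + g B
    rw [hΦ'gt (Φ B) hBB, hG]
    simp only [hes B]
private lemma strictMono_piece4 {F : ℝ → ℝ} {c₁ c₂ c₃ : ℝ} (h12 : c₁ ≤ c₂) (h23 : c₂ ≤ c₃)
    (m1 : StrictMonoOn F (Set.Iic c₁)) (m2 : StrictMonoOn F (Set.Icc c₁ c₂))
    (m3 : StrictMonoOn F (Set.Icc c₂ c₃)) (m4 : StrictMonoOn F (Set.Ici c₃)) : StrictMono F := by
  have mid : StrictMonoOn F (Set.Icc c₁ c₃) := by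
    intro x hx y hy hxy
    rcases le_or_gt y c₂ with hy2 | hy2
    · exact m2 ⟨hx.1, hxy.le.trans hy2⟩ ⟨hy.1, hy2⟩ hxy
    rcases le_or_gt x c₂ with hx2 | hx2
    · calc F x ≤ F c₂ := m2.monotoneOn ⟨hx.1, hx2⟩ ⟨h12, le_rfl⟩ hx2
        _ < F y := m3 ⟨le_rfl, h23⟩ ⟨hy2.le, hy.2⟩ hy2
    · exact m3 ⟨hx2.le, hxy.le.trans hy.2⟩ ⟨hx2.le.trans hxy.le, hy.2⟩ hxy
  exact strictMono_piece3 (h12.trans h23) m1 mid m4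

private lemma init_exists {h f g φ₀ φ₁ : ℝ → ℝ} {ξ₀ x₁ x₂ : ℝ}
    (hhc : Continuous h) (hfc : Continuous f) (hgc : Continuous g)
    (hhm : StrictMono h) (hfm : StrictMono f) (hgm : StrictMono g)
    (hξ₀ : h ξ₀ = 0) (hfix : g x₁ = x₁) (hx₁l : ξ₀ < x₁)
    (hx₂l : x₁ < x₂) (hx₂r : x₂ < h x₁ + x₁) (hfx : ∀ x : ℝ, f x < x)
    (hφ₀m : StrictMonoOn φ₀ (Set.Icc (f x₁) x₁))
    (hφ₀c : ContinuousOn φ₀ (Set.Icc (f x₁) x₁))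
    (hφ₀s : φ₀ '' Set.Icc (f x₁) x₁ = Set.Icc x₁ x₂)
    (hφ₁m : StrictMonoOn φ₁ (Set.Icc x₁ x₂))
    (hφ₁c : ContinuousOn φ₁ (Set.Icc x₁ x₂))
    (hφ₁s : φ₁ '' Set.Icc x₁ x₂ = Set.Icc x₂ (h x₁ + x₁)) :
    ∃ s : (ℝ × ℝ) × (ℝ → ℝ), IsGood h f g φ₀ φ₁ x₁ x₂ s ∧ s.1.1 = x₁ ∧ s.1.2 = x₂ := by
  classical
  have hx0 : f x₁ < x₁ := hfx x₁
  obtain ⟨hep00, hep01⟩ := img_endpoints hx0.le hφ₀m hφ₀s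
  obtain ⟨hep10, hep11⟩ := img_endpoints hx₂l.le hφ₁m hφ₁s
  set x₃ : ℝ := h x₁ + x₁ with hx₃
  set cl0 : ℝ → ℝ := fun x => max (f x₁) (min x x₁) with hcl0
  set cl1 : ℝ → ℝ := fun x => max x₁ (min x x₂) with hcl1
  have hcl0mem : ∀ x, cl0 x ∈ Set.Icc (f x₁) x₁ :=
    fun x => ⟨le_max_left _ _, max_le hx0.le (min_le_right _ _)⟩
  have hcl1mem : ∀ x, cl1 x ∈ Set.Icc x₁ x₂ :=
    fun x => ⟨le_max_left _ _, max_le hx₂l.le (min_le_right _ _)⟩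
  have hcl0c : Continuous cl0 := continuous_const.max (continuous_id.min continuous_const)
  have hcl1c : Continuous cl1 := continuous_const.max (continuous_id.min continuous_const)
  have hcl0id : ∀ x ∈ Set.Icc (f x₁) x₁, cl0 x = x := by
    intro x hx; rw [hcl0]; simp only; rw [min_eq_left hx.2, max_eq_right hx.1]
  have hcl1id : ∀ x ∈ Set.Icc x₁ x₂, cl1 x = x := by
    intro x hx; rw [hcl1]; simp only; rw [min_eq_left hx.2, max_eq_right hx.1]
  set Φ : ℝ → ℝ := fun x =>
    if x ≤ f x₁ then x + (x₁ - f x₁)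
    else if x ≤ x₁ then φ₀ (cl0 x)
    else if x ≤ x₂ then φ₁ (cl1 x) else x + (x₃ - x₂) with hΦ
  have val01 : ∀ x ∈ Set.Icc (f x₁) x₁, Φ x = φ₀ x := by
    intro x hx
    rw [hΦ]; simp only
    rcases le_or_gt x (f x₁) with h1 | h1
    · have hxx : x = f x₁ := le_antisymm h1 hx.1
      rw [if_pos h1, hxx, hep00]; ring
    · rw [if_neg (not_le.2 h1), if_pos hx.2, hcl0id x hx]
  have val12 : ∀ x ∈ Set.Icc x₁ x₂, Φ x = φ₁ x := by
    intro x hx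
    rw [hΦ]; simp only
    rw [if_neg (not_le.2 (lt_of_lt_of_le hx0 hx.1))]
    rcases le_or_gt x x₁ with h1 | h1
    · have hxx : x = x₁ := le_antisymm h1 hx.1
      rw [if_pos h1, hxx, hcl0id x₁ ⟨hx0.le, le_rfl⟩, hep01, ← hep10]
    · rw [if_neg (not_le.2 h1), if_pos hx.2, hcl1id x hx]
  have vallo : ∀ x, x ≤ f x₁ → Φ x = x + (x₁ - f x₁) := by
    intro x hx; rw [hΦ]; simp only; rw [if_pos hx]
  have valhi : ∀ x, x₂ ≤ x → Φ x = x + (x₃ - x₂) := by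
    intro x hx
    rcases le_or_gt x x₂ with h1 | h1
    · have hxx : x = x₂ := le_antisymm h1 hx
      rw [hxx, val12 x₂ ⟨hx₂l.le, le_rfl⟩, hep11]; ring
    · rw [hΦ]; simp only
      rw [if_neg (not_le.2 ((hx0.trans hx₂l).trans h1)), if_neg (not_le.2 (hx₂l.trans h1)), if_neg (not_le.2 h1)]
  have hΦmono : StrictMono Φ := by
    apply strictMono_piece4 (c₁ := f x₁) (c₂ := x₁) (c₃ := x₂) hx0.le hx₂l.le
    · intro x hx y hy hxy
      rw [vallo x hx, vallo y hy]; linarith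
    · intro x hx y hy hxy
      rw [val01 x hx, val01 y hy]; exact hφ₀m hx hy hxy
    · intro x hx y hy hxy
      rw [val12 x hx, val12 y hy]; exact hφ₁m hx hy hxy
    · intro x hx y hy hxy
      rw [valhi x hx, valhi y hy]; linarith
  have hΦcont : Continuous Φ := by
    rw [hΦ]
    apply Continuous.if_le _ _ continuous_id continuous_const
    · intro a ha; simp only [id_eq] at ha
      rw [ha, if_pos hx0.le]
      have : cl0 (f x₁) = f x₁ := hcl0id _ ⟨le_rfl, hx0.le⟩
      rw [this, hep00]; ring
    · exact continuous_id.add continuous_const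
    · apply Continuous.if_le _ _ continuous_id continuous_const
      · intro a ha; simp only [id_eq] at ha
        rw [ha, if_pos hx₂l.le]
        have : cl0 x₁ = x₁ := hcl0id _ ⟨hx0.le, le_rfl⟩
        have h2 : cl1 x₁ = x₁ := hcl1id _ ⟨le_rfl, hx₂l.le⟩
        rw [this, h2, hep01, hep10]
      · exact hφ₀c.comp_continuous hcl0c hcl0mem
      · apply Continuous.if_le _ _ continuous_id continuous_const
        · intro a ha; simp only [id_eq] at ha
          rw [ha]
          have h2 : cl1 x₂ = x₂ := hcl1id _ ⟨hx₂l.le, le_rfl⟩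
          rw [h2, hep11]; ring
        · exact hφ₁c.comp_continuous hcl1c hcl1mem
        · exact continuous_id.add continuous_const
  have hΦsurj : Function.Surjective Φ := by
    apply surj_of_bounds hΦcont
    intro z
    refine ⟨min (f x₁) (z - (x₁ - f x₁)), max x₂ (z - (x₃ - x₂)), ?_, ?_⟩
    · rw [vallo _ (min_le_left _ _)]
      have := min_le_right (f x₁) (z - (x₁ - f x₁)); linarith
    · rw [valhi _ (le_max_left _ _)]
      have := le_max_right x₂ (z - (x₃ - x₂)); linarith
  have hΦx₁ : Φ x₁ = x₂ := by rw [val01 x₁ ⟨hx0.le, le_rfl⟩, hep01]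
  have hΦx₂ : Φ x₂ = x₃ := by rw [val12 x₂ ⟨hx₂l.le, le_rfl⟩, hep11]
  refine ⟨((x₁, x₂), Φ), ⟨le_rfl, hx₂l, le_rfl, hΦx₁, ?_, hΦmono, hΦcont, hΦsurj, val01, val12, ?_⟩, rfl, rfl⟩
  · show x₂ < Φ x₂
    rw [hΦx₂]; exact hx₂r
  · intro x hx
    simp only at hx
    have hxx : x = x₁ := le_antisymm hx.2 hx.1
    subst hxx
    show Φ (Φ x) = h (Φ (f x)) + g x
    rw [hΦx₁, hΦx₂, val01 (f x) ⟨le_rfl, hx0.le⟩, hep00, hfix]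
set_option maxHeartbeats 2000000 in
theorem stmt_18 (h f g : ℝ → ℝ)
    (hhc : Continuous h) (hfc : Continuous f) (hgc : Continuous g)
    (hhm : StrictMono h) (hfm : StrictMono f) (hgm : StrictMono g)
    (hhs : Function.Surjective h)
    (ξ₀ : ℝ) (hξ₀ : h ξ₀ = 0)
    (hfx : ∀ x : ℝ, f x < x)
    (x₁ : ℝ) (hfix : g x₁ = x₁) (hx₁l : ξ₀ < x₁) (hx₁r : f x₁ ≤ ξ₀)
    (hgx : ∀ x : ℝ, x₁ ≤ x → x ≤ g x)
    (x₂ : ℝ) (hx₂l : x₁ < x₂) (hx₂r : x₂ < h x₁ + x₁)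
    (φ₀ φ₁ : ℝ → ℝ)
    (hφ₀m : StrictMonoOn φ₀ (Set.Icc (f x₁) x₁))
    (hφ₀c : ContinuousOn φ₀ (Set.Icc (f x₁) x₁))
    (hφ₀s : φ₀ '' Set.Icc (f x₁) x₁ = Set.Icc x₁ x₂)
    (hφ₁m : StrictMonoOn φ₁ (Set.Icc x₁ x₂))
    (hφ₁c : ContinuousOn φ₁ (Set.Icc x₁ x₂))
    (hφ₁s : φ₁ '' Set.Icc x₁ x₂ = Set.Icc x₂ (h x₁ + x₁)) :
    ∃! φ : ℝ → ℝ, Continuous φ ∧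
      (∀ x ∈ Set.Icc (f x₁) x₁, φ x = φ₀ x) ∧
      (∀ x ∈ Set.Icc x₁ x₂, φ x = φ₁ x) ∧
      ∀ x : ℝ, φ (φ x) = h (φ (f x)) + g x := by
  classical
  have hx0 : f x₁ < x₁ := hfx x₁
  have hhx₁ : 0 < h x₁ := by rw [← hξ₀]; exact hhm hx₁l
  obtain ⟨hep00, hep01⟩ := img_endpoints hx0.le hφ₀m hφ₀s
  obtain ⟨hep10, hep11⟩ := img_endpoints hx₂l.le hφ₁m hφ₁s
  obtain ⟨s0, hs0, hs0b, hs0B⟩ := init_exists hhc hfc hgc hhm hfm hgm hξ₀ hfix hx₁l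
    hx₂l hx₂r hfx hφ₀m hφ₀c hφ₀s hφ₁m hφ₁c hφ₁s
  have stepex : ∀ s : {s : (ℝ × ℝ) × (ℝ → ℝ) // IsGood h f g φ₀ φ₁ x₁ x₂ s},
      ∃ s' : {s : (ℝ × ℝ) × (ℝ → ℝ) // IsGood h f g φ₀ φ₁ x₁ x₂ s},
        s'.1.1.1 = s.1.1.2 ∧ s'.1.1.2 = s.1.2 s.1.1.2 ∧ (∀ y : ℝ, y ≤ s.1.1.2 → s'.1.2 y = s.1.2 y) ∧
          s'.1.2 s'.1.1.2 = h (s.1.2 (f s.1.1.2)) + g s.1.1.2 := by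
    rintro ⟨s, hs⟩
    obtain ⟨s', h1, h2, h3, h4, h5⟩ := step_exists hhc hfc hgc hhm hfm hgm hgx hfx s hs
    exact ⟨⟨s', h1⟩, h2, h3, h4, h5⟩
  choose step Rb' RB' Rag' Rval' using stepex
  set S : ℕ → {s : (ℝ × ℝ) × (ℝ → ℝ) // IsGood h f g φ₀ φ₁ x₁ x₂ s} :=
    fun n => step^[n] ⟨s0, hs0⟩ with hSdef
  have hS : ∀ n, S (n + 1) = step (S n) := fun n => Function.iterate_succ_apply' step n _
  set b : ℕ → ℝ := fun n => (S n).1.1.1 with hbdef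
  set B : ℕ → ℝ := fun n => (S n).1.1.2 with hBdef
  set Φ : ℕ → ℝ → ℝ := fun n => (S n).1.2 with hΦdef
  have hG : ∀ n, IsGood h f g φ₀ φ₁ x₁ x₂ ((b n, B n), Φ n) := fun n => (S n).2
  have Gb : ∀ n, x₁ ≤ b n := fun n => (hG n).1
  have GbB : ∀ n, b n < B n := fun n => (hG n).2.1
  have Gx2B : ∀ n, x₂ ≤ B n := fun n => (hG n).2.2.1
  have GΦb : ∀ n, Φ n (b n) = B n := fun n => (hG n).2.2.2.1
  have GBB : ∀ n, B n < Φ n (B n) := fun n => (hG n).2.2.2.2.1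
  have Gmono : ∀ n, StrictMono (Φ n) := fun n => (hG n).2.2.2.2.2.1
  have Gcont : ∀ n, Continuous (Φ n) := fun n => (hG n).2.2.2.2.2.2.1
  have G8 : ∀ n, ∀ x ∈ Set.Icc (f x₁) x₁, Φ n x = φ₀ x := fun n => (hG n).2.2.2.2.2.2.2.2.1
  have G9 : ∀ n, ∀ x ∈ Set.Icc x₁ x₂, Φ n x = φ₁ x := fun n => (hG n).2.2.2.2.2.2.2.2.2.1
  have G11 : ∀ n, ∀ x ∈ Set.Icc x₁ (b n), Φ n (Φ n x) = h (Φ n (f x)) + g x :=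
    fun n => (hG n).2.2.2.2.2.2.2.2.2.2
  have Rb : ∀ n, b (n + 1) = B n := fun n => by
    show (S (n+1)).1.1.1 = (S n).1.1.2; rw [hS n]; exact Rb' (S n)
  have RB : ∀ n, B (n + 1) = Φ n (B n) := fun n => by
    show (S (n+1)).1.1.2 = (S n).1.2 (S n).1.1.2; rw [hS n]; exact RB' (S n)
  have Rag : ∀ n, ∀ y : ℝ, y ≤ B n → Φ (n + 1) y = Φ n y := fun n y hy => by
    show (S (n+1)).1.2 y = (S n).1.2 y; rw [hS n]; exact Rag' (S n) y hy
  have Rval : ∀ n, Φ (n + 1) (B (n + 1)) = h (Φ n (f (B n))) + g (B n) := fun n => by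
    show (S (n+1)).1.2 (S (n+1)).1.1.2 = h ((S n).1.2 (f (S n).1.1.2)) + g (S n).1.1.2
    rw [hS n]; exact Rval' (S n)
  have Bmono : ∀ {m n : ℕ}, m ≤ n → B m ≤ B n := by
    intro m n hmn
    exact monotone_nat_of_le_succ (fun k => by rw [RB k]; exact (GBB k).le) hmn
  have Blt : ∀ n, B n < B (n + 1) := fun n => by rw [RB n]; exact GBB n
  have agree : ∀ m n, m ≤ n → ∀ y : ℝ, y ≤ B m → Φ n y = Φ m y := by
    intro m n hmn
    induction n, hmn using Nat.le_induction with
    | base => intro y _; rfl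
    | succ n hmn ih =>
      intro y hy
      rw [Rag n y (hy.trans (Bmono hmn)), ih y hy]
  have Bgrow : ∀ n, B n + h x₁ ≤ B (n + 2) := by
    intro n
    have e1 : B (n + 2) = h (Φ n (f (B n))) + g (B n) := by
      rw [show n + 2 = (n + 1) + 1 from rfl, RB (n+1), Rval n]
    have e2 : x₁ ≤ Φ n (f (B n)) := by
      have : Φ n (f x₁) = x₁ := by rw [G8 n (f x₁) ⟨le_rfl, hx0.le⟩, hep00]
      rw [← this]
      exact (Gmono n).monotone (hfm.monotone ((Gb n).trans (GbB n).le))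
    have e3 : B n ≤ g (B n) := hgx _ ((Gb n).trans (GbB n).le)
    have e4 : h x₁ ≤ h (Φ n (f (B n))) := hhm.monotone e2
    linarith
  have cover_aux : ∀ u : ℕ → ℝ, (∀ n, u n ≤ u (n + 1)) → (∀ n, u n + h x₁ ≤ u (n + 2)) →
      ∀ z : ℝ, ∃ n, z ≤ u n := by
    intro u hum hug z
    have key : ∀ k : ℕ, u 0 + k * h x₁ ≤ u (2 * k) := by
      intro k
      induction k with
      | zero => simp
      | succ k ih =>
        have := hug (2 * k)
        have h2 : 2 * (k + 1) = 2 * k + 2 := by ring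
        rw [h2]
        push_cast
        push_cast at ih
        nlinarith
    obtain ⟨k, hk⟩ := exists_nat_ge ((z - u 0) / h x₁)
    refine ⟨2 * k, le_trans ?_ (key k)⟩
    have : z - u 0 ≤ k * h x₁ := by
      rw [div_le_iff₀ hhx₁] at hk; linarith
    linarith
  have Bcover : ∀ z : ℝ, ∃ n, z ≤ B n := cover_aux B (fun n => (Blt n).le) Bgrow
  set φp : ℝ → ℝ := fun x => Φ (Nat.find (Bcover x)) x with hφpdef
  have φp_eq : ∀ n (x : ℝ), x ≤ B n → φp x = Φ n x := by
    intro n x hx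
    have h1 : Nat.find (Bcover x) ≤ n := Nat.find_min' (Bcover x) hx
    exact (agree _ n h1 x (Nat.find_spec (Bcover x))).symm
  have p0 : ∀ x ∈ Set.Icc (f x₁) x₁, φp x = φ₀ x := by
    intro x hx
    rw [φp_eq 0 x (hx.2.trans (hx₂l.le.trans (Gx2B 0)))]
    exact G8 0 x hx
  have p1 : ∀ x ∈ Set.Icc x₁ x₂, φp x = φ₁ x := by
    intro x hx
    rw [φp_eq 0 x (hx.2.trans (Gx2B 0))]
    exact G9 0 x hx
  have pep0 : φp (f x₁) = x₁ := by rw [p0 (f x₁) ⟨le_rfl, hx0.le⟩, hep00]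
  have pep1 : φp x₁ = x₂ := by rw [p0 x₁ ⟨hx0.le, le_rfl⟩, hep01]
  have pep2 : φp x₂ = h x₁ + x₁ := by rw [p1 x₂ ⟨hx₂l.le, le_rfl⟩, hep11]
  have pm : StrictMono φp := by
    intro x y hxy
    obtain ⟨n, hn⟩ := Bcover y
    rw [φp_eq n x (hxy.le.trans hn), φp_eq n y hn]
    exact Gmono n hxy
  have pc : Continuous φp := by
    rw [continuous_iff_continuousAt]
    intro x
    obtain ⟨n, hn⟩ := Bcover x
    have hx' : x < B (n + 1) := lt_of_le_of_lt hn (Blt n)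
    have hev : φp =ᶠ[nhds x] Φ (n + 1) := by
      filter_upwards [Iio_mem_nhds hx'] with y hy
      exact φp_eq (n + 1) y (le_of_lt hy)
    exact ((Gcont (n + 1)).continuousAt).congr hev.symm
  have plow : ∀ x : ℝ, f x₁ ≤ x → x₁ ≤ φp x := fun x hx => pep0 ▸ pm.monotone hx
  have pheq : ∀ x : ℝ, x₁ ≤ x → φp (φp x) = h (φp (f x)) + g x := by
    intro x hx
    obtain ⟨n, hn⟩ := Bcover x
    have hxb : x ≤ b (n + 1) := by rw [Rb n]; exact hn
    have hxB : x ≤ B (n + 1) := hxb.trans (GbB (n+1)).le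
    have hΦxB : Φ (n+1) x ≤ B (n+1) := by
      rw [← GΦb (n+1)]; exact (Gmono (n+1)).monotone hxb
    rw [φp_eq (n+1) x hxB, φp_eq (n+1) _ hΦxB, φp_eq (n+1) (f x) ((hfx x).le.trans hxB)]
    exact G11 (n+1) x ⟨hx, hxb⟩
  -- inverse of h
  set ei := StrictMono.orderIsoOfSurjective h hhm hhs with heidef
  set hinv : ℝ → ℝ := fun y => ei.symm y with hinvdef
  have hhi : ∀ y, h (hinv y) = y := fun y =>
    StrictMono.orderIsoOfSurjective_self_symm_apply h hhm hhs y
  have hih : ∀ x, hinv (h x) = x := fun x =>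
    StrictMono.orderIsoOfSurjective_symm_apply_self h hhm hhs x
  have hinvc : Continuous hinv := OrderIso.continuous ei.symm
  -- iterates of f
  have hitc : ∀ n : ℕ, Continuous (f^[n]) := fun n => hfc.iterate n
  have hitm : ∀ n : ℕ, StrictMono (f^[n]) := fun n => hfm.iterate n
  have hitle : ∀ (n : ℕ) (x : ℝ), f^[n] x ≤ x := by
    intro n
    induction n with
    | zero => intro x; simp
    | succ n ih =>
      intro x
      rw [Function.iterate_succ_apply]
      exact (ih (f x)).trans (hfx x).le
  set a : ℕ → ℝ := fun n => f^[n + 1] x₁ with hadef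
  have ha0 : a 0 = f x₁ := by simp [hadef]
  have haS : ∀ n, a (n + 1) = f (a n) := fun n => by
    show f^[n+2] x₁ = f (f^[n+1] x₁); rw [Function.iterate_succ_apply']
  have haS' : ∀ n, a (n + 1) = f^[n + 1] (f x₁) := fun n => by
    show f^[n+2] x₁ = f^[n+1] (f x₁); rw [Function.iterate_succ_apply]
  have hanti : StrictAnti a := by
    apply strictAnti_nat_of_succ_lt
    intro n; rw [haS n]; exact hfx (a n)
  have acover : ∀ t : ℝ, ∃ n, a n ≤ t := by
    intro t
    by_contra hcon
    push_neg at hcon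
    have hbdd : BddBelow (Set.range a) := by
      refine ⟨t, ?_⟩
      rintro y ⟨n, rfl⟩
      exact (hcon n).le
    have h1 : Tendsto a atTop (nhds (⨅ n, a n)) := tendsto_atTop_ciInf hanti.antitone hbdd
    have h2 : Tendsto (fun n => a (n + 1)) atTop (nhds (⨅ n, a n)) :=
      h1.comp (tendsto_add_atTop_nat 1)
    have h3 : Tendsto (fun n => f (a n)) atTop (nhds (f (⨅ n, a n))) :=
      (hfc.tendsto _).comp h1
    have h4 : (fun n => a (n + 1)) = fun n => f (a n) := funext haS
    rw [h4] at h2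
    have h5 : f (⨅ n, a n) = ⨅ n, a n := tendsto_nhds_unique h3 h2
    exact absurd h5 (ne_of_lt (hfx _))
  -- the backward parametrized values
  obtain ⟨v, hv0, hvS⟩ : ∃ v : ℕ → ℝ → ℝ, (∀ x, v 0 x = φp x) ∧
      ∀ n x, v (n + 1) x = hinv (φp (v n x) - g (f^[n] x)) :=
    ⟨fun n => Nat.rec φp (fun m vm x => hinv (φp (vm x) - g (f^[m] x))) n,
      fun _ => rfl, fun _ _ => rfl⟩
  have hvh : ∀ n x, h (v (n + 1) x) = φp (v n x) - g (f^[n] x) := by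
    intro n x; rw [hvS n x, hhi]
  have vcont : ∀ n, Continuous (v n) := by
    intro n
    induction n with
    | zero => exact pc.congr (fun x => (hv0 x).symm)
    | succ n ih =>
      have hcc : Continuous (fun x => hinv (φp (v n x) - g (f^[n] x))) :=
        hinvc.comp ((pc.comp ih).sub (hgc.comp (hitc n)))
      exact hcc.congr (fun x => (hvS n x).symm)
  -- range bound for v
  have vge : ∀ n, ∀ x ∈ Set.Icc (f x₁) x₁, f x₁ ≤ v n x := by
    have argpos : ∀ n, (∀ x ∈ Set.Icc (f x₁) x₁, f x₁ ≤ v n x) →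
        ∀ x ∈ Set.Icc (f x₁) x₁, 0 < φp (v n x) - g (f^[n] x) := by
      intro n hn x hx
      match n with
      | 0 =>
        have h1 : x₂ ≤ φp (v 0 x) := by
          rw [hv0]
          rw [← pep1]
          exact pm.monotone (plow x hx.1)
        have h2 : g x ≤ x₁ := by rw [← hfix]; exact hgm.monotone hx.2
        simp only [Function.iterate_zero_apply]
        linarith [hx₂l]
      | (m + 1) =>
        have h1 : x₁ ≤ φp (v (m+1) x) := plow _ (hn x hx)
        have h2 : f^[m+1] x ≤ f x₁ := by
          calc f^[m+1] x ≤ f^[m+1] x₁ := (hitm (m+1)).monotone hx.2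
            _ = f^[m] (f x₁) := Function.iterate_succ_apply f m x₁
            _ ≤ f x₁ := hitle m (f x₁)
        have h3 : g (f^[m+1] x) < x₁ := by
          rw [← hfix]
          exact lt_of_le_of_lt (hgm.monotone h2) (hgm hx0)
        linarith
    intro n
    induction n with
    | zero =>
      intro x hx
      rw [hv0]
      exact hx0.le.trans (plow x hx.1)
    | succ n ih =>
      intro x hx
      have hpos := argpos n ih x hx
      have : h (v (n+1) x) > h ξ₀ := by
        rw [hξ₀, hvh n x]; exact hpos
      exact hx₁r.trans (hhm.lt_iff_lt.1 this).le
  have vend : ∀ n, v (n + 1) x₁ = v n (f x₁) := by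
    intro n
    induction n with
    | zero =>
      rw [hvS 0 x₁, hv0 x₁, hv0 (f x₁), pep0]
      simp only [Function.iterate_zero_apply]
      rw [pep1, pep2, hfix]
      have heq : h x₁ + x₁ - x₁ = h x₁ := by ring
      rw [heq]
      exact hih x₁
    | succ n ih =>
      rw [hvS (n+1) x₁, hvS n (f x₁), ih]
      rw [show f^[n+1] x₁ = f^[n] (f x₁) from Function.iterate_succ_apply f n x₁]
  -- extensions of the iterates of f, and their inverses
  set E : ℕ → ℝ → ℝ := fun n x =>
    if x ≤ f x₁ then x + (f^[n + 1] (f x₁) - f x₁)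
    else if x ≤ x₁ then f^[n + 1] x
    else x + (f^[n + 1] x₁ - x₁) with hEdef
  have hEval : ∀ n, ∀ x ∈ Set.Icc (f x₁) x₁, E n x = f^[n + 1] x := by
    intro n x hx
    rw [hEdef]; simp only
    rcases le_or_gt x (f x₁) with h1 | h1
    · have hxx : x = f x₁ := le_antisymm h1 hx.1
      rw [if_pos h1, hxx]; ring
    · rw [if_neg (not_le.2 h1), if_pos hx.2]
  have hEhi : ∀ n z, x₁ ≤ z → E n z = z + (f^[n + 1] x₁ - x₁) := by
    intro n z hz
    rw [hEdef]; simp only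
    rw [if_neg (not_le.2 (lt_of_lt_of_le hx0 hz))]
    rcases le_or_gt z x₁ with h1 | h1
    · have hzz : z = x₁ := le_antisymm h1 hz
      rw [if_pos h1, hzz]; ring
    · rw [if_neg (not_le.2 h1)]
  have hEmono : ∀ n, StrictMono (E n) := by
    intro n
    apply strictMono_piece3 (c₁ := f x₁) (c₂ := x₁) hx0.le
    · intro x hx y hy hxy
      have hx' : x ≤ f x₁ := hx
      have hy' : y ≤ f x₁ := hy
      rw [hEdef]; simp only
      rw [if_pos hx', if_pos hy']; linarith
    · intro x hx y hy hxy
      rw [hEval n x hx, hEval n y hy]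
      exact hitm (n+1) hxy
    · intro x hx y hy hxy
      have hx' : x₁ ≤ x := hx
      have hy' : x₁ ≤ y := hy
      rw [hEhi n x hx', hEhi n y hy']; linarith
  have hEcont : ∀ n, Continuous (E n) := by
    intro n
    rw [hEdef]
    apply Continuous.if_le _ _ continuous_id continuous_const
    · intro c hc; simp only [id_eq] at hc
      rw [hc, if_pos hx0.le]; ring
    · exact continuous_id.add continuous_const
    · apply Continuous.if_le (hitc (n+1)) (continuous_id.add continuous_const)
        continuous_id continuous_const
      intro c hc; simp only [id_eq] at hc
      rw [hc]; simp only [Pi.add_apply, id_eq]; ring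
  have hEsurj : ∀ n, Function.Surjective (E n) := by
    intro n
    apply surj_of_bounds (hEcont n)
    intro z
    refine ⟨min (f x₁) (z - (f^[n + 1] (f x₁) - f x₁)), max x₁ (z - (f^[n + 1] x₁ - x₁)) + 1, ?_, ?_⟩
    · rw [hEdef]; simp only
      rw [if_pos (min_le_left _ _)]
      have := min_le_right (f x₁) (z - (f^[n + 1] (f x₁) - f x₁)); linarith
    · rw [hEdef]; simp only
      have hgt : x₁ < max x₁ (z - (f^[n + 1] x₁ - x₁)) + 1 := by
        have := le_max_left x₁ (z - (f^[n + 1] x₁ - x₁)); linarith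
      rw [if_neg (not_le.2 (hx0.trans hgt)), if_neg (not_le.2 hgt)]
      have := le_max_right x₁ (z - (f^[n + 1] x₁ - x₁)); linarith
  set Einv : ℕ → ℝ → ℝ := fun n y =>
    (StrictMono.orderIsoOfSurjective (E n) (hEmono n) (hEsurj n)).symm y with hEinvdef
  have hEinvc : ∀ n, Continuous (Einv n) :=
    fun n => OrderIso.continuous (StrictMono.orderIsoOfSurjective (E n) (hEmono n) (hEsurj n)).symm
  have hEinvE : ∀ n x, Einv n (E n x) = x :=
    fun n x => StrictMono.orderIsoOfSurjective_symm_apply_self (E n) (hEmono n) (hEsurj n) x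
  have hEEinv : ∀ n y, E n (Einv n y) = y :=
    fun n y => StrictMono.orderIsoOfSurjective_self_symm_apply (E n) (hEmono n) (hEsurj n) y
  have hEinvm : ∀ n, Monotone (Einv n) :=
    fun n => (StrictMono.orderIsoOfSurjective (E n) (hEmono n) (hEsurj n)).symm.monotone
  have hEinvval : ∀ n, ∀ x ∈ Set.Icc (f x₁) x₁, Einv n (f^[n + 1] x) = x := by
    intro n x hx
    rw [← hEval n x hx, hEinvE]
  have hEmem : ∀ n t, a (n + 1) ≤ t → t ≤ a n → Einv n t ∈ Set.Icc (f x₁) x₁ := by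
    intro n t h1 h2
    constructor
    · have : Einv n (a (n + 1)) ≤ Einv n t := hEinvm n h1
      rwa [haS' n, hEinvval n (f x₁) ⟨le_rfl, hx0.le⟩] at this
    · have : Einv n t ≤ Einv n (a n) := hEinvm n h2
      rwa [show a n = f^[n+1] x₁ from rfl, hEinvval n x₁ ⟨hx0.le, le_rfl⟩] at this
  have hEiter : ∀ n t, a (n + 1) ≤ t → t ≤ a n → f^[n + 1] (Einv n t) = t := by
    intro n t h1 h2
    rw [← hEval n _ (hEmem n t h1 h2), hEEinv]
  -- definition of φ
  set φ : ℝ → ℝ := fun t =>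
    if f x₁ ≤ t then φp t else v (Nat.find (acover t)) (Einv (Nat.find (acover t) - 1) t)
    with hφdef
  have hφhi : ∀ t, f x₁ ≤ t → φ t = φp t := fun t ht => if_pos ht
  have hfindpos : ∀ t, t < f x₁ → 1 ≤ Nat.find (acover t) := by
    intro t ht
    by_contra hcon
    push_neg at hcon
    interval_cases hn : (Nat.find (acover t))
    · have := Nat.find_spec (acover t)
      rw [hn, ha0] at this
      exact absurd this (not_le.2 ht)
  -- the piece lemma
  have L : ∀ n, ∀ x ∈ Set.Icc (f x₁) x₁, φ (f^[n] x) = v n x := by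
    intro n x hx
    match n with
    | 0 =>
      simp only [Function.iterate_zero_apply]
      rw [hφhi x hx.1, hv0]
    | (m + 1) =>
      have htam : f^[m + 1] x ≤ a m := (hitm (m+1)).monotone hx.2
      have htam1 : a (m + 1) ≤ f^[m + 1] x := by
        rw [haS' m]; exact (hitm (m+1)).monotone hx.1
      rcases le_or_gt (f x₁) (f^[m + 1] x) with hge | hlt
      · -- degenerate boundary case
        have ham : a m ≤ a 0 := hanti.antitone (Nat.zero_le m)
        rw [ha0] at ham
        have ht0 : f^[m + 1] x = f x₁ := le_antisymm (htam.trans ham) hge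
        have ham0 : a m = f x₁ := le_antisymm ham (ht0 ▸ htam)
        have hm0 : m = 0 := by
          by_contra hmne
          have hlt2 : a m < a 0 := hanti (Nat.pos_of_ne_zero hmne)
          rw [ha0] at hlt2
          exact absurd ham0 (ne_of_lt hlt2)
        subst hm0
        have hxx : x = x₁ := hfm.injective (by simpa using ht0)
        rw [ht0, hφhi (f x₁) le_rfl, pep0, hxx, vend 0, hv0 (f x₁), pep0]
      · -- main case
        have hm'le : Nat.find (acover (f^[m + 1] x)) ≤ m + 1 := Nat.find_min' _ htam1
        have hm'pos : 1 ≤ Nat.find (acover (f^[m + 1] x)) := hfindpos _ hlt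
        have hφt : φ (f^[m + 1] x) = v (Nat.find (acover (f^[m + 1] x)))
            (Einv (Nat.find (acover (f^[m + 1] x)) - 1) (f^[m + 1] x)) := if_neg (not_le.2 hlt)
        rcases eq_or_lt_of_le hm'le with hEq | hlt'
        · rw [hφt, hEq]
          simp only [Nat.add_sub_cancel]
          rw [hEinvval m x hx]
        · have hm'm : Nat.find (acover (f^[m + 1] x)) ≤ m := Nat.lt_succ_iff.1 hlt'
          have h1 : a m ≤ a (Nat.find (acover (f^[m + 1] x))) := hanti.antitone hm'm
          have h2 : a (Nat.find (acover (f^[m + 1] x))) ≤ f^[m + 1] x := Nat.find_spec (acover (f^[m + 1] x))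
          have ht' : f^[m + 1] x = a m := le_antisymm htam (h1.trans h2)
          have hfm' : a (Nat.find (acover (f^[m + 1] x))) = a m := le_antisymm (ht' ▸ h2) h1
          have hm'' : Nat.find (acover (f^[m + 1] x)) = m := hanti.injective hfm'
          have hxx : x = x₁ := (hitm (m+1)).injective ht'
          obtain ⟨k, rfl⟩ : ∃ k, m = k + 1 :=
            ⟨m - 1, (Nat.succ_pred_eq_of_pos (hm'pos.trans hm'm)).symm⟩
          rw [hφt, hm'']
          simp only [Nat.add_sub_cancel]
          have hEk : Einv k (f^[k + 1 + 1] x) = f x₁ := by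
            rw [ht', haS' k]
            exact hEinvval k (f x₁) ⟨le_rfl, hx0.le⟩
          rw [hEk, hxx, vend (k + 1)]
  -- piece representation on intervals
  have rep : ∀ n t, a (n + 1) ≤ t → t ≤ a n → φ t = v (n + 1) (Einv n t) := by
    intro n t h1 h2
    have hx' := hEmem n t h1 h2
    have hL := L (n + 1) (Einv n t) hx'
    rw [hEiter n t h1 h2] at hL
    exact hL
  -- coverage of the region below f x₁
  have cov : ∀ t, t < f x₁ → ∃ m, ∃ x ∈ Set.Icc (f x₁) x₁, f^[m + 1] x = t := by
    intro t ht
    have hm'pos := hfindpos t ht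
    obtain ⟨k, hk⟩ : ∃ k, Nat.find (acover t) = k + 1 :=
      ⟨Nat.find (acover t) - 1, (Nat.succ_pred_eq_of_pos hm'pos).symm⟩
    have spec : a (k + 1) ≤ t := by rw [← hk]; exact Nat.find_spec (acover t)
    have tlt : t < a k := by
      have := Nat.find_min (acover t) (m := k) (by omega)
      exact not_le.1 this
    have hmem : t ∈ Set.Icc (f^[k + 1] (f x₁)) (f^[k + 1] x₁) := by
      constructor
      · rw [← haS' k]; exact spec
      · exact tlt.le
    obtain ⟨x, hxmem, hxeq⟩ :=
      intermediate_value_Icc hx0.le ((hitc (k + 1)).continuousOn) hmem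
    exact ⟨k, x, hxmem, hxeq⟩
  -- continuity of φ
  have φcont : Continuous φ := by
    rw [continuous_iff_continuousAt]
    intro t
    rcases lt_trichotomy t (f x₁) with hlt | heq | hgt
    · have hm'pos := hfindpos t hlt
      obtain ⟨k, hk⟩ : ∃ k, Nat.find (acover t) = k + 1 :=
        ⟨Nat.find (acover t) - 1, (Nat.succ_pred_eq_of_pos hm'pos).symm⟩
      have spec : a (k + 1) ≤ t := by rw [← hk]; exact Nat.find_spec (acover t)
      have tlt : t < a k := by
        have := Nat.find_min (acover t) (m := k) (by omega)
        exact not_le.1 this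
      rcases eq_or_lt_of_le spec with hEq | hlt2
      · -- node point
        have cwaR : ContinuousWithinAt φ (Set.Ici t) t := by
          have hcwa : ContinuousWithinAt φ (Set.Icc (a (k + 1)) (a k)) t := by
            refine ContinuousWithinAt.congr
              ((((vcont (k + 1)).comp (hEinvc k)).continuousAt).continuousWithinAt)
              (fun u hu => rep k u hu.1 hu.2) (rep k t spec tlt.le)
          exact hcwa.mono_of_mem_nhdsWithin (Icc_mem_nhdsGE_of_mem ⟨hEq.le, tlt⟩)
        have cwaL : ContinuousWithinAt φ (Set.Iic t) t := by
          have ha2 : a (k + 2) < t := by rw [← hEq]; exact hanti (by omega)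
          have hcwa : ContinuousWithinAt φ (Set.Icc (a (k + 2)) (a (k + 1))) t := by
            refine ContinuousWithinAt.congr
              ((((vcont (k + 2)).comp (hEinvc (k + 1))).continuousAt).continuousWithinAt)
              (fun u hu => rep (k + 1) u hu.1 hu.2) (rep (k + 1) t ha2.le hEq.ge)
          exact hcwa.mono_of_mem_nhdsWithin (Icc_mem_nhdsLE_of_mem ⟨ha2, hEq.ge⟩)
        have := cwaL.union cwaR
        rwa [Set.Iic_union_Ici, continuousWithinAt_univ] at this
      · -- interior of a piece
        have hev : φ =ᶠ[nhds t] fun u => v (k + 1) (Einv k u) := by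
          filter_upwards [Ioo_mem_nhds hlt2 tlt] with u hu
          exact rep k u hu.1.le hu.2.le
        exact (((vcont (k + 1)).comp (hEinvc k)).continuousAt).congr hev.symm
    · -- t = f x₁
      subst heq
      have cwaR : ContinuousWithinAt φ (Set.Ici (f x₁)) (f x₁) :=
        ContinuousWithinAt.congr (pc.continuousAt.continuousWithinAt)
          (fun u hu => hφhi u hu) (hφhi _ le_rfl)
      have cwaL : ContinuousWithinAt φ (Set.Iic (f x₁)) (f x₁) := by
        have ha1 : a 1 < f x₁ := by rw [← ha0]; exact hanti (by omega)
        have ha00 : a 0 = f x₁ := ha0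
        have hcwa : ContinuousWithinAt φ (Set.Icc (a 1) (a 0)) (f x₁) := by
          refine ContinuousWithinAt.congr
            ((((vcont 1).comp (hEinvc 0)).continuousAt).continuousWithinAt)
            (fun u hu => rep 0 u hu.1 hu.2) (rep 0 (f x₁) (ha00 ▸ ha1.le) ha00.ge)
        exact hcwa.mono_of_mem_nhdsWithin (Icc_mem_nhdsLE_of_mem ⟨ha00 ▸ ha1, ha00.ge⟩)
      have := cwaL.union cwaR
      rwa [Set.Iic_union_Ici, continuousWithinAt_univ] at this
    · have hev : φ =ᶠ[nhds t] φp := by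
        filter_upwards [Ioi_mem_nhds hgt] with u hu
        exact hφhi u hu.le
      exact pc.continuousAt.congr hev.symm
  -- the functional equation for φ
  have heqφ : ∀ t : ℝ, φ (φ t) = h (φ (f t)) + g t := by
    intro t
    rcases le_or_gt x₁ t with h1 | h1
    · rw [hφhi t (hx0.le.trans h1), hφhi (f t) (hfm.monotone h1),
        hφhi (φp t) (hx0.le.trans (plow t (hx0.le.trans h1)))]
      exact pheq t h1
    rcases le_or_gt (f x₁) t with h2 | h2
    · have hxt : t ∈ Set.Icc (f x₁) x₁ := ⟨h2, h1.le⟩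
      have hft : φ (f t) = v 1 t := by
        have := L 1 t hxt
        simpa using this
      rw [hφhi t h2, hφhi (φp t) (hx0.le.trans (plow t h2)), hft]
      have hv1 := hvh 0 t
      rw [hv0 t] at hv1
      simp only [Function.iterate_zero_apply] at hv1
      rw [hv1]; ring
    · obtain ⟨m, x, hxmem, hxeq⟩ := cov t h2
      have e1 : φ t = v (m + 1) x := by rw [← hxeq]; exact L (m + 1) x hxmem
      have e2 : φ (f t) = v (m + 2) x := by
        rw [← hxeq, ← Function.iterate_succ_apply' f (m + 1) x]
        exact L (m + 2) x hxmem
      rw [e1, e2, hφhi (v (m + 1) x) (vge (m + 1) x hxmem)]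
      have e3 := hvh (m + 1) x
      rw [e3, hxeq]; ring
  -- the sequence of forward points for uniqueness
  set c : ℕ → ℝ := fun n => φp^[n] x₁ with hcdef
  have hc0 : c 0 = x₁ := rfl
  have hcS : ∀ n, c (n + 1) = φp (c n) := fun n => Function.iterate_succ_apply' φp n x₁
  have hcge : ∀ n, x₁ ≤ c n := by
    intro n
    induction n with
    | zero => rw [hc0]
    | succ n ih => rw [hcS n]; exact plow (c n) (hx0.le.trans ih)
  have hcmono : ∀ n, c n < c (n + 1) := by
    intro n
    induction n with
    | zero => rw [hcS 0, hc0, pep1]; exact hx₂l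
    | succ n ih =>
      rw [hcS (n+1)]
      calc c (n + 1) = φp (c n) := hcS n
        _ < φp (c (n + 1)) := pm ih
  have hcgrow : ∀ n, c n + h x₁ ≤ c (n + 2) := by
    intro n
    have e1 : c (n + 2) = h (φp (f (c n))) + g (c n) := by
      rw [show n + 2 = (n+1)+1 from rfl, hcS (n+1), hcS n]
      exact pheq (c n) (hcge n)
    have e2 : x₁ ≤ φp (f (c n)) := by
      rw [← pep0]; exact pm.monotone (hfm.monotone (hcge n))
    have e3 : c n ≤ g (c n) := hgx _ (hcge n)
    have e4 : h x₁ ≤ h (φp (f (c n))) := hhm.monotone e2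
    linarith
  have ccover : ∀ z : ℝ, ∃ n, z ≤ c n := cover_aux c (fun n => (hcmono n).le) hcgrow
  -- conclude
  refine ⟨φ, ⟨φcont, fun x hx => (hφhi x hx.1).trans (p0 x hx),
    fun x hx => (hφhi x (hx0.le.trans hx.1)).trans (p1 x hx), heqφ⟩, ?_⟩
  rintro φ' ⟨hc', h0', h1', he'⟩
  have U1 : ∀ n, ∀ y ∈ Set.Icc (f x₁) (c (n + 1)), φ' y = φp y := by
    intro n
    induction n with
    | zero =>
      intro y hy
      have hc1 : c 1 = x₂ := by rw [hcS 0, hc0, pep1]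
      rcases le_total y x₁ with hy1 | hy1
      · rw [h0' y ⟨hy.1, hy1⟩, p0 y ⟨hy.1, hy1⟩]
      · rw [h1' y ⟨hy1, hc1 ▸ hy.2⟩, p1 y ⟨hy1, hc1 ▸ hy.2⟩]
    | succ n ih =>
      intro y hy
      rcases le_total y (c (n + 1)) with hy1 | hy1
      · exact ih y ⟨hy.1, hy1⟩
      · have hymem : y ∈ Set.Icc (φp (c n)) (φp (c (n + 1))) := by
          constructor
          · rw [← hcS n]; exact hy1
          · rw [← hcS (n + 1)]; exact hy.2
        obtain ⟨x, hxmem, hxeq⟩ :=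
          intermediate_value_Icc (hcmono n).le pc.continuousOn hymem
        have hx1x : x₁ ≤ x := (hcge n).trans hxmem.1
        have hφ'x : φ' x = φp x := ih x ⟨hx0.le.trans hx1x, hxmem.2⟩
        have hφ'fx : φ' (f x) = φp (f x) :=
          ih (f x) ⟨hfm.monotone hx1x, (hfx x).le.trans hxmem.2⟩
        calc φ' y = φ' (φ' x) := by rw [hφ'x, hxeq]
          _ = h (φ' (f x)) + g x := he' x
          _ = h (φp (f x)) + g x := by rw [hφ'fx]
          _ = φp (φp x) := (pheq x hx1x).symm
          _ = φp y := by rw [hxeq]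
  have U1' : ∀ y, f x₁ ≤ y → φ' y = φp y := by
    intro y hy
    obtain ⟨n, hn⟩ := ccover y
    exact U1 n y ⟨hy, hn.trans (hcmono n).le⟩
  have U2 : ∀ n, ∀ x ∈ Set.Icc (f x₁) x₁, φ' (f^[n] x) = v n x := by
    intro n
    induction n with
    | zero =>
      intro x hx
      simp only [Function.iterate_zero_apply]
      rw [U1' x hx.1, hv0]
    | succ n ih =>
      intro x hx
      have e := he' (f^[n] x)
      rw [← Function.iterate_succ_apply' f n x] at e
      rw [ih x hx, U1' (v n x) (vge n x hx)] at e
      have e2 := hvh n x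
      apply hhm.injective
      rw [e2]
      linarith [e]
  funext t
  rcases le_or_gt (f x₁) t with h1 | h1
  · rw [U1' t h1, hφhi t h1]
  · obtain ⟨m, x, hxmem, hxeq⟩ := cov t h1
    rw [← hxeq, U2 (m + 1) x hxmem, L (m + 1) x hxmem]
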